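/- There exist 10 points in ℝ² whose pairwise Euclidean distances are all at most 1 and whose convex hull has 2-dimensional Lebesgue measure at least 0.74913721. Equivalently, A*_10 ≥ 0.74913721. -/

import Mathlib

open MeasureTheory

/-- `maxArea n` is the supremum of the areas (2-dimensional Lebesgue measures of convex
hulls) of sets of at most `n` points in the Euclidean plane whose pairwise Euclidean
distances are all at most `1`. -/
noncomputable def maxArea (n : ℕ) : ℝ :=
  sSup {a : ℝ | ∃ P : Finset (EuclideanSpace ℝ (Fin 2)),
    P.card ≤ n ∧ (∀ p ∈ P, ∀ q ∈ P, dist p q ≤ 1) ∧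
    a = (volume (convexHull ℝ (P : Set (EuclideanSpace ℝ (Fin 2))))).toReal}

open Pointwise

lemma hull_sub_le' {S : Set (ℝ×ℝ)} {a b c : ℝ} (h : ∀ z ∈ S, a*z.1+b*z.2 ≤ c) :
    convexHull ℝ S ⊆ {z : ℝ×ℝ | a*z.1+b*z.2 ≤ c} :=
  convexHull_min h (convex_halfSpace_le ⟨fun x y => by simp; ring, fun s x => by simp; ring⟩ c)

lemma hull_sub_ge' {S : Set (ℝ×ℝ)} {a b c : ℝ} (h : ∀ z ∈ S, c ≤ a*z.1+b*z.2) :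
    convexHull ℝ S ⊆ {z : ℝ×ℝ | c ≤ a*z.1+b*z.2} :=
  convexHull_min h (convex_halfSpace_ge ⟨fun x y => by simp; ring, fun s x => by simp; ring⟩ c)

noncomputable def lmap' (a b : ℝ) : ℝ×ℝ →ₗ[ℝ] ℝ where
  toFun := fun z => a*z.1+b*z.2
  map_add' := fun x y => by simp; ring
  map_smul' := fun s x => by simp; ring

lemma line_nullset' {a b c : ℝ} (h : a ≠ 0 ∨ b ≠ 0) :
    volume {z : ℝ × ℝ | a*z.1 + b*z.2 = c} = 0 := by
  obtain ⟨z₀, hz₀⟩ : ∃ z₀ : ℝ×ℝ, lmap' a b z₀ = c := by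
    rcases h with ha | hb
    · exact ⟨(c/a, 0), by simp [lmap']; field_simp⟩
    · exact ⟨(0, c/b), by simp [lmap']; field_simp⟩
  have hker : LinearMap.ker (lmap' a b) ≠ ⊤ := by
    intro ht
    rcases h with ha | hb
    · have : lmap' a b (1,0) = 0 := by rw [← LinearMap.mem_ker, ht]; trivial
      simp [lmap'] at this; exact ha this
    · have : lmap' a b (0,1) = 0 := by rw [← LinearMap.mem_ker, ht]; trivial
      simp [lmap'] at this; exact hb this
  have hset : {z : ℝ × ℝ | a*z.1 + b*z.2 = c} = z₀ +ᵥ (LinearMap.ker (lmap' a b) : Set (ℝ×ℝ)) := by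
    ext z
    simp only [Set.mem_setOf_eq, Set.mem_vadd_set_iff_neg_vadd_mem, SetLike.mem_coe,
      LinearMap.mem_ker, vadd_eq_add, map_add, map_neg, hz₀]
    have : lmap' a b z = a*z.1+b*z.2 := rfl
    rw [this]
    constructor
    · intro hz; rw [hz]; ring
    · intro hz; linarith
  rw [hset, measure_vadd]
  exact Measure.addHaar_submodule volume _ hker

open intervalIntegral in
lemma II' {a b : ℝ} : IntervalIntegrable (fun x : ℝ => x) volume a b :=
  intervalIntegrable_id

open intervalIntegral in
lemma oneSubInt' : ∫ y in (0:ℝ)..1, (1 - y) = 1/2 := by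
  rw [integral_sub intervalIntegrable_const II', integral_id, intervalIntegral.integral_const]
  norm_num

lemma stdTri_vol' : volume {z : ℝ × ℝ | 0 < z.1 ∧ 0 < z.2 ∧ z.1 + z.2 < 1} = ENNReal.ofReal (1/2) := by
  have hset : {z : ℝ × ℝ | 0 < z.1 ∧ 0 < z.2 ∧ z.1 + z.2 < 1}
      = regionBetween (fun _ => (0:ℝ)) (fun x => 1 - x) (Set.Ioo 0 1) := by
    ext ⟨x, y⟩
    simp only [regionBetween, Set.mem_setOf_eq, Set.mem_Ioo]
    constructor
    · rintro ⟨hx, hy, hxy⟩; exact ⟨⟨hx, by linarith⟩, hy, by linarith⟩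
    · rintro ⟨⟨hx, hx1⟩, hy, hy1⟩; exact ⟨hx, hy, by linarith⟩
  have hi1 : IntegrableOn (fun _ => (0:ℝ)) (Set.Ioo (0:ℝ) 1) volume :=
    integrableOn_const (by simp) (by simp)
  have hi2 : IntegrableOn (fun x => 1 - x) (Set.Ioo (0:ℝ) 1) volume := by
    apply Integrable.sub ((integrableOn_const (by simp) (by simp) : IntegrableOn (fun _ => (1:ℝ)) (Set.Ioo (0:ℝ) 1) volume))
    exact (intervalIntegrable_iff_integrableOn_Ioo_of_le (by norm_num)).1 II'
  rw [hset, Measure.volume_eq_prod, volume_regionBetween_eq_integral hi1 hi2 measurableSet_Ioo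
    (fun x hx => by simp at hx ⊢; linarith [hx.2])]
  congr 1
  have h2 : ∫ y in Set.Ioo (0:ℝ) 1, (1 - y) = ∫ y in (0:ℝ)..1, (1 - y) := by
    rw [intervalIntegral.integral_of_le (by norm_num),
      MeasureTheory.integral_Ioc_eq_integral_Ioo]
  simp only [Pi.sub_apply, sub_zero, h2, oneSubInt']

lemma combo_mem' (p q r : ℝ × ℝ) {s t : ℝ} (hs : 0 ≤ s) (ht : 0 ≤ t) (hst : s + t ≤ 1) :
    (1 - s - t) • p + s • q + t • r ∈ convexHull ℝ ({p, q, r} : Set (ℝ×ℝ)) := by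
  have h := Finset.centerMass_mem_convexHull (Finset.univ : Finset (Fin 3))
    (w := ![1 - s - t, s, t]) (z := ![p, q, r]) (s := ({p, q, r} : Set (ℝ×ℝ)))
    (fun i _ => by fin_cases i <;> simp <;> linarith)
    (by simp [Fin.sum_univ_three]; linarith)
    (fun i _ => by fin_cases i <;> simp)
  have hc : Finset.univ.centerMass ![1 - s - t, s, t] ![p, q, r]
      = (1 - s - t) • p + s • q + t • r := by
    rw [Finset.centerMass]
    simp [Fin.sum_univ_three]
    rw [show (1 - s - t + s + t) = 1 by ring]
    simp
  rwa [hc] at h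

lemma triangle_vol' (p q r : ℝ × ℝ)
    (hd : 0 ≤ (q.1-p.1)*(r.2-p.2) - (q.2-p.2)*(r.1-p.1)) :
    ENNReal.ofReal (((q.1-p.1)*(r.2-p.2) - (q.2-p.2)*(r.1-p.1))/2)
      ≤ volume (convexHull ℝ ({p, q, r} : Set (ℝ×ℝ))) := by
  set d : ℝ := (q.1-p.1)*(r.2-p.2) - (q.2-p.2)*(r.1-p.1) with hdef
  set L := Matrix.toLin (Module.Basis.finTwoProd ℝ) (Module.Basis.finTwoProd ℝ)
    !![q.1-p.1, r.1-p.1; q.2-p.2, r.2-p.2] with hL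
  set T₀ : Set (ℝ×ℝ) := {z : ℝ × ℝ | 0 < z.1 ∧ 0 < z.2 ∧ z.1 + z.2 < 1} with hT
  have happ : ∀ z : ℝ×ℝ, L z = ((q.1-p.1)*z.1 + (r.1-p.1)*z.2, (q.2-p.2)*z.1 + (r.2-p.2)*z.2) :=
    fun z => Matrix.toLin_finTwoProd_apply _ _ _ _ z
  have hsub : (fun z => p + z) '' (L '' T₀) ⊆ convexHull ℝ ({p, q, r} : Set (ℝ×ℝ)) := by
    rintro _ ⟨_, ⟨⟨s, t⟩, ⟨hs, ht, hst⟩, rfl⟩, rfl⟩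
    have : p + L (s, t) = (1 - s - t) • p + s • q + t • r := by
      rw [happ]
      apply Prod.ext <;> simp <;> ring
    show p + L (s, t) ∈ _
    rw [this]
    exact combo_mem' p q r (le_of_lt hs) (le_of_lt ht) (le_of_lt hst)
  calc ENNReal.ofReal (d/2) = ENNReal.ofReal d * ENNReal.ofReal (1/2) := by
        rw [← ENNReal.ofReal_mul hd]; ring_nf
    _ = ENNReal.ofReal |LinearMap.det L| * volume T₀ := by
        rw [stdTri_vol']
        congr 2
        rw [hL, LinearMap.det_toLin, Matrix.det_fin_two_of, abs_of_nonneg]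
        · rw [hdef]; ring
        · rw [hdef] at hd; linarith [hd]
    _ = volume (L '' T₀) := (Measure.addHaar_image_linearMap volume L T₀).symm
    _ = volume ((fun z => p + z) '' (L '' T₀)) := by
        rw [show (fun z => p + z) '' (L '' T₀) = p +ᵥ (L '' T₀) from rfl, measure_vadd]
    _ ≤ volume (convexHull ℝ ({p, q, r} : Set (ℝ×ℝ))) := measure_mono hsub

noncomputable def gmap' : EuclideanSpace ℝ (Fin 2) →ₗ[ℝ] ℝ × ℝ where
  toFun := fun x => (x 0, x 1)
  map_add' := fun x y => by ext <;> simp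
  map_smul' := fun c x => by ext <;> simp

lemma gmap_mp' : MeasurePreserving gmap' volume volume :=
  (volume_preserving_finTwoArrow ℝ).comp
    (EuclideanSpace.volume_preserving_symm_measurableEquiv_toLp (Fin 2))

lemma gmap_inj' : Function.Injective gmap' := by
  intro x y h
  have h0 := congrArg Prod.fst h
  have h1 := congrArg Prod.snd h
  ext i
  fin_cases i
  · exact h0
  · exact h1

noncomputable def pt' (a b : ℝ) : EuclideanSpace ℝ (Fin 2) := !₂[a, b]

lemma gmap_pt' (a b : ℝ) : gmap' (pt' a b) = (a, b) := rfl

lemma dist_pt_le' {a b c d : ℝ} (h : (a-c)^2 + (b-d)^2 ≤ 1) : dist (pt' a b) (pt' c d) ≤ 1 := by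
  rw [EuclideanSpace.dist_eq]
  rw [show (1:ℝ) = Real.sqrt 1 by simp]
  apply Real.sqrt_le_sqrt
  have e0 : dist (pt' a b 0) (pt' c d 0) = |a - c| := rfl
  have e1 : dist (pt' a b 1) (pt' c d 1) = |b - d| := rfl
  rw [Fin.sum_univ_two, e0, e1, sq_abs, sq_abs]
  exact h

lemma pt_ne' {a b c d : ℝ} (h : a ≠ c) : pt' a b ≠ pt' c d :=
  fun he => h (congrArg (fun v => v 0) he)

noncomputable def dp0 : EuclideanSpace ℝ (Fin 2) := pt' (-239756548280730353 / 500000000000000000 : ℝ) (-87264422738206731 / 500000000000000000 : ℝ)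
noncomputable def dp1 : EuclideanSpace ℝ (Fin 2) := pt' (-240556148278331553 / 1000000000000000000 : ℝ) (-451831425644505719 / 1000000000000000000 : ℝ)
noncomputable def dp2 : EuclideanSpace ℝ (Fin 2) := pt' (1821110994536667 / 20000000000000000 : ℝ) (-64334536806996389 / 125000000000000000 : ℝ)
noncomputable def dp3 : EuclideanSpace ℝ (Fin 2) := pt' (192171376423485869 / 500000000000000000 : ℝ) (-90428362728714911 / 250000000000000000 : ℝ)
noncomputable def dp4 : EuclideanSpace ℝ (Fin 2) := pt' (128823056613530829 / 250000000000000000 : ℝ) (-72733152781800541 / 1000000000000000000 : ℝ)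
noncomputable def dp5 : EuclideanSpace ℝ (Fin 2) := pt' (23570626929288119 / 50000000000000000 : ℝ) (6744532979766401 / 50000000000000000 : ℝ)
noncomputable def dp6 : EuclideanSpace ℝ (Fin 2) := pt' (384709745845870759 / 1000000000000000000 : ℝ) (164290180507129457 / 500000000000000000 : ℝ)
noncomputable def dp7 : EuclideanSpace ℝ (Fin 2) := pt' (27194596918416209 / 250000000000000000 : ℝ) (242583320272250037 / 500000000000000000 : ℝ)
noncomputable def dp8 : EuclideanSpace ℝ (Fin 2) := pt' (-218363956344908129 / 1000000000000000000 : ℝ) (218124670345625987 / 500000000000000000 : ℝ)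
noncomputable def dp9 : EuclideanSpace ℝ (Fin 2) := pt' (-449496047651511853 / 1000000000000000000 : ℝ) (38058912885823261 / 200000000000000000 : ℝ)

noncomputable def c0 : ℝ × ℝ := ((-239756548280730353 / 500000000000000000 : ℝ), (-87264422738206731 / 500000000000000000 : ℝ))
noncomputable def c1 : ℝ × ℝ := ((-240556148278331553 / 1000000000000000000 : ℝ), (-451831425644505719 / 1000000000000000000 : ℝ))
noncomputable def c2 : ℝ × ℝ := ((1821110994536667 / 20000000000000000 : ℝ), (-64334536806996389 / 125000000000000000 : ℝ))
noncomputable def c3 : ℝ × ℝ := ((192171376423485869 / 500000000000000000 : ℝ), (-90428362728714911 / 250000000000000000 : ℝ))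
noncomputable def c4 : ℝ × ℝ := ((128823056613530829 / 250000000000000000 : ℝ), (-72733152781800541 / 1000000000000000000 : ℝ))
noncomputable def c5 : ℝ × ℝ := ((23570626929288119 / 50000000000000000 : ℝ), (6744532979766401 / 50000000000000000 : ℝ))
noncomputable def c6 : ℝ × ℝ := ((384709745845870759 / 1000000000000000000 : ℝ), (164290180507129457 / 500000000000000000 : ℝ))
noncomputable def c7 : ℝ × ℝ := ((27194596918416209 / 250000000000000000 : ℝ), (242583320272250037 / 500000000000000000 : ℝ))
noncomputable def c8 : ℝ × ℝ := ((-218363956344908129 / 1000000000000000000 : ℝ), (218124670345625987 / 500000000000000000 : ℝ))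
noncomputable def c9 : ℝ × ℝ := ((-449496047651511853 / 1000000000000000000 : ℝ), (38058912885823261 / 200000000000000000 : ℝ))

noncomputable def decagon : Finset (EuclideanSpace ℝ (Fin 2)) :=
  letI : DecidableEq (EuclideanSpace ℝ (Fin 2)) := Classical.decEq _
  {dp0, dp1, dp2, dp3, dp4, dp5, dp6, dp7, dp8, dp9}

lemma dpne01 : dp0 ≠ dp1 := pt_ne' (by norm_num [dp0, dp1])
lemma dpne02 : dp0 ≠ dp2 := pt_ne' (by norm_num [dp0, dp2])
lemma dpne03 : dp0 ≠ dp3 := pt_ne' (by norm_num [dp0, dp3])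
lemma dpne04 : dp0 ≠ dp4 := pt_ne' (by norm_num [dp0, dp4])
lemma dpne05 : dp0 ≠ dp5 := pt_ne' (by norm_num [dp0, dp5])
lemma dpne06 : dp0 ≠ dp6 := pt_ne' (by norm_num [dp0, dp6])
lemma dpne07 : dp0 ≠ dp7 := pt_ne' (by norm_num [dp0, dp7])
lemma dpne08 : dp0 ≠ dp8 := pt_ne' (by norm_num [dp0, dp8])
lemma dpne09 : dp0 ≠ dp9 := pt_ne' (by norm_num [dp0, dp9])
lemma dpne12 : dp1 ≠ dp2 := pt_ne' (by norm_num [dp1, dp2])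
lemma dpne13 : dp1 ≠ dp3 := pt_ne' (by norm_num [dp1, dp3])
lemma dpne14 : dp1 ≠ dp4 := pt_ne' (by norm_num [dp1, dp4])
lemma dpne15 : dp1 ≠ dp5 := pt_ne' (by norm_num [dp1, dp5])
lemma dpne16 : dp1 ≠ dp6 := pt_ne' (by norm_num [dp1, dp6])
lemma dpne17 : dp1 ≠ dp7 := pt_ne' (by norm_num [dp1, dp7])
lemma dpne18 : dp1 ≠ dp8 := pt_ne' (by norm_num [dp1, dp8])
lemma dpne19 : dp1 ≠ dp9 := pt_ne' (by norm_num [dp1, dp9])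
lemma dpne23 : dp2 ≠ dp3 := pt_ne' (by norm_num [dp2, dp3])
lemma dpne24 : dp2 ≠ dp4 := pt_ne' (by norm_num [dp2, dp4])
lemma dpne25 : dp2 ≠ dp5 := pt_ne' (by norm_num [dp2, dp5])
lemma dpne26 : dp2 ≠ dp6 := pt_ne' (by norm_num [dp2, dp6])
lemma dpne27 : dp2 ≠ dp7 := pt_ne' (by norm_num [dp2, dp7])
lemma dpne28 : dp2 ≠ dp8 := pt_ne' (by norm_num [dp2, dp8])
lemma dpne29 : dp2 ≠ dp9 := pt_ne' (by norm_num [dp2, dp9])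
lemma dpne34 : dp3 ≠ dp4 := pt_ne' (by norm_num [dp3, dp4])
lemma dpne35 : dp3 ≠ dp5 := pt_ne' (by norm_num [dp3, dp5])
lemma dpne36 : dp3 ≠ dp6 := pt_ne' (by norm_num [dp3, dp6])
lemma dpne37 : dp3 ≠ dp7 := pt_ne' (by norm_num [dp3, dp7])
lemma dpne38 : dp3 ≠ dp8 := pt_ne' (by norm_num [dp3, dp8])
lemma dpne39 : dp3 ≠ dp9 := pt_ne' (by norm_num [dp3, dp9])
lemma dpne45 : dp4 ≠ dp5 := pt_ne' (by norm_num [dp4, dp5])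
lemma dpne46 : dp4 ≠ dp6 := pt_ne' (by norm_num [dp4, dp6])
lemma dpne47 : dp4 ≠ dp7 := pt_ne' (by norm_num [dp4, dp7])
lemma dpne48 : dp4 ≠ dp8 := pt_ne' (by norm_num [dp4, dp8])
lemma dpne49 : dp4 ≠ dp9 := pt_ne' (by norm_num [dp4, dp9])
lemma dpne56 : dp5 ≠ dp6 := pt_ne' (by norm_num [dp5, dp6])
lemma dpne57 : dp5 ≠ dp7 := pt_ne' (by norm_num [dp5, dp7])
lemma dpne58 : dp5 ≠ dp8 := pt_ne' (by norm_num [dp5, dp8])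
lemma dpne59 : dp5 ≠ dp9 := pt_ne' (by norm_num [dp5, dp9])
lemma dpne67 : dp6 ≠ dp7 := pt_ne' (by norm_num [dp6, dp7])
lemma dpne68 : dp6 ≠ dp8 := pt_ne' (by norm_num [dp6, dp8])
lemma dpne69 : dp6 ≠ dp9 := pt_ne' (by norm_num [dp6, dp9])
lemma dpne78 : dp7 ≠ dp8 := pt_ne' (by norm_num [dp7, dp8])
lemma dpne79 : dp7 ≠ dp9 := pt_ne' (by norm_num [dp7, dp9])
lemma dpne89 : dp8 ≠ dp9 := pt_ne' (by norm_num [dp8, dp9])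

lemma decagon_card : decagon.card = 10 := by
  classical
  letI : DecidableEq (EuclideanSpace ℝ (Fin 2)) := Classical.decEq _
  rw [decagon]
  rw [Finset.card_insert_of_notMem (by simp only [Finset.mem_insert, Finset.mem_singleton]; push_neg; exact ⟨dpne01, dpne02, dpne03, dpne04, dpne05, dpne06, dpne07, dpne08, dpne09⟩)]
  rw [Finset.card_insert_of_notMem (by simp only [Finset.mem_insert, Finset.mem_singleton]; push_neg; exact ⟨dpne12, dpne13, dpne14, dpne15, dpne16, dpne17, dpne18, dpne19⟩)]
  rw [Finset.card_insert_of_notMem (by simp only [Finset.mem_insert, Finset.mem_singleton]; push_neg; exact ⟨dpne23, dpne24, dpne25, dpne26, dpne27, dpne28, dpne29⟩)]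
  rw [Finset.card_insert_of_notMem (by simp only [Finset.mem_insert, Finset.mem_singleton]; push_neg; exact ⟨dpne34, dpne35, dpne36, dpne37, dpne38, dpne39⟩)]
  rw [Finset.card_insert_of_notMem (by simp only [Finset.mem_insert, Finset.mem_singleton]; push_neg; exact ⟨dpne45, dpne46, dpne47, dpne48, dpne49⟩)]
  rw [Finset.card_insert_of_notMem (by simp only [Finset.mem_insert, Finset.mem_singleton]; push_neg; exact ⟨dpne56, dpne57, dpne58, dpne59⟩)]
  rw [Finset.card_insert_of_notMem (by simp only [Finset.mem_insert, Finset.mem_singleton]; push_neg; exact ⟨dpne67, dpne68, dpne69⟩)]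
  rw [Finset.card_insert_of_notMem (by simp only [Finset.mem_insert, Finset.mem_singleton]; push_neg; exact ⟨dpne78, dpne79⟩)]
  rw [Finset.card_insert_of_notMem (by simp only [Finset.mem_singleton]; exact dpne89)]
  rfl

lemma decagon_dist : ∀ p ∈ decagon, ∀ q ∈ decagon, dist p q ≤ 1 := by
  intro p hp q hq
  rw [decagon] at hp hq
  simp only [Finset.mem_insert, Finset.mem_singleton] at hp hq
  rcases hp with rfl|rfl|rfl|rfl|rfl|rfl|rfl|rfl|rfl|rfl <;> rcases hq with rfl|rfl|rfl|rfl|rfl|rfl|rfl|rfl|rfl|rfl <;>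
    (simp only [dp0, dp1, dp2, dp3, dp4, dp5, dp6, dp7, dp8, dp9]; exact dist_pt_le' (by norm_num))

set_option maxHeartbeats 2000000 in
lemma decagon_hull_vol :
    ENNReal.ofReal ((74913721 / 100000000 : ℝ)) ≤ volume (convexHull ℝ ({c0, c1, c2, c3, c4, c5, c6, c7, c8, c9} : Set (ℝ × ℝ))) := by
  set T0 : Set (ℝ × ℝ) := convexHull ℝ ({c0, c1, c2} : Set (ℝ × ℝ)) with hT0def
  set T1 : Set (ℝ × ℝ) := convexHull ℝ ({c0, c2, c3} : Set (ℝ × ℝ)) with hT1def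
  set T2 : Set (ℝ × ℝ) := convexHull ℝ ({c0, c3, c4} : Set (ℝ × ℝ)) with hT2def
  set T3 : Set (ℝ × ℝ) := convexHull ℝ ({c0, c4, c5} : Set (ℝ × ℝ)) with hT3def
  set T4 : Set (ℝ × ℝ) := convexHull ℝ ({c0, c5, c6} : Set (ℝ × ℝ)) with hT4def
  set T5 : Set (ℝ × ℝ) := convexHull ℝ ({c0, c6, c7} : Set (ℝ × ℝ)) with hT5def
  set T6 : Set (ℝ × ℝ) := convexHull ℝ ({c0, c7, c8} : Set (ℝ × ℝ)) with hT6def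
  set T7 : Set (ℝ × ℝ) := convexHull ℝ ({c0, c8, c9} : Set (ℝ × ℝ)) with hT7def
  have hsub : (((((((T0 ∪ T1) ∪ T2) ∪ T3) ∪ T4) ∪ T5) ∪ T6) ∪ T7) ⊆ convexHull ℝ ({c0, c1, c2, c3, c4, c5, c6, c7, c8, c9} : Set (ℝ × ℝ)) := by

    have hTs0 : T0 ⊆ convexHull ℝ ({c0, c1, c2, c3, c4, c5, c6, c7, c8, c9} : Set (ℝ × ℝ)) := by
      rw [hT0def]
      apply convexHull_mono
      intro z hz
      simp only [Set.mem_insert_iff, Set.mem_singleton_iff] at hz ⊢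
      tauto
    have hTs1 : T1 ⊆ convexHull ℝ ({c0, c1, c2, c3, c4, c5, c6, c7, c8, c9} : Set (ℝ × ℝ)) := by
      rw [hT1def]
      apply convexHull_mono
      intro z hz
      simp only [Set.mem_insert_iff, Set.mem_singleton_iff] at hz ⊢
      tauto
    have hTs2 : T2 ⊆ convexHull ℝ ({c0, c1, c2, c3, c4, c5, c6, c7, c8, c9} : Set (ℝ × ℝ)) := by
      rw [hT2def]
      apply convexHull_mono
      intro z hz
      simp only [Set.mem_insert_iff, Set.mem_singleton_iff] at hz ⊢
      tauto
    have hTs3 : T3 ⊆ convexHull ℝ ({c0, c1, c2, c3, c4, c5, c6, c7, c8, c9} : Set (ℝ × ℝ)) := by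
      rw [hT3def]
      apply convexHull_mono
      intro z hz
      simp only [Set.mem_insert_iff, Set.mem_singleton_iff] at hz ⊢
      tauto
    have hTs4 : T4 ⊆ convexHull ℝ ({c0, c1, c2, c3, c4, c5, c6, c7, c8, c9} : Set (ℝ × ℝ)) := by
      rw [hT4def]
      apply convexHull_mono
      intro z hz
      simp only [Set.mem_insert_iff, Set.mem_singleton_iff] at hz ⊢
      tauto
    have hTs5 : T5 ⊆ convexHull ℝ ({c0, c1, c2, c3, c4, c5, c6, c7, c8, c9} : Set (ℝ × ℝ)) := by
      rw [hT5def]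
      apply convexHull_mono
      intro z hz
      simp only [Set.mem_insert_iff, Set.mem_singleton_iff] at hz ⊢
      tauto
    have hTs6 : T6 ⊆ convexHull ℝ ({c0, c1, c2, c3, c4, c5, c6, c7, c8, c9} : Set (ℝ × ℝ)) := by
      rw [hT6def]
      apply convexHull_mono
      intro z hz
      simp only [Set.mem_insert_iff, Set.mem_singleton_iff] at hz ⊢
      tauto
    have hTs7 : T7 ⊆ convexHull ℝ ({c0, c1, c2, c3, c4, c5, c6, c7, c8, c9} : Set (ℝ × ℝ)) := by
      rw [hT7def]
      apply convexHull_mono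
      intro z hz
      simp only [Set.mem_insert_iff, Set.mem_singleton_iff] at hz ⊢
      tauto
    exact Set.union_subset (Set.union_subset (Set.union_subset (Set.union_subset (Set.union_subset (Set.union_subset (Set.union_subset hTs0 hTs1) hTs2) hTs3) hTs4) hTs5) hTs6) hTs7
  have hm0 : NullMeasurableSet T0 volume := by
    rw [hT0def]
    exact (((Set.finite_singleton _).insert _ |>.insert _).isCompact_convexHull (𝕜 := ℝ) |>.isClosed.measurableSet).nullMeasurableSet
  have hm1 : NullMeasurableSet T1 volume := by
    rw [hT1def]
    exact (((Set.finite_singleton _).insert _ |>.insert _).isCompact_convexHull (𝕜 := ℝ) |>.isClosed.measurableSet).nullMeasurableSet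
  have hm2 : NullMeasurableSet T2 volume := by
    rw [hT2def]
    exact (((Set.finite_singleton _).insert _ |>.insert _).isCompact_convexHull (𝕜 := ℝ) |>.isClosed.measurableSet).nullMeasurableSet
  have hm3 : NullMeasurableSet T3 volume := by
    rw [hT3def]
    exact (((Set.finite_singleton _).insert _ |>.insert _).isCompact_convexHull (𝕜 := ℝ) |>.isClosed.measurableSet).nullMeasurableSet
  have hm4 : NullMeasurableSet T4 volume := by
    rw [hT4def]
    exact (((Set.finite_singleton _).insert _ |>.insert _).isCompact_convexHull (𝕜 := ℝ) |>.isClosed.measurableSet).nullMeasurableSet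
  have hm5 : NullMeasurableSet T5 volume := by
    rw [hT5def]
    exact (((Set.finite_singleton _).insert _ |>.insert _).isCompact_convexHull (𝕜 := ℝ) |>.isClosed.measurableSet).nullMeasurableSet
  have hm6 : NullMeasurableSet T6 volume := by
    rw [hT6def]
    exact (((Set.finite_singleton _).insert _ |>.insert _).isCompact_convexHull (𝕜 := ℝ) |>.isClosed.measurableSet).nullMeasurableSet
  have hm7 : NullMeasurableSet T7 volume := by
    rw [hT7def]
    exact (((Set.finite_singleton _).insert _ |>.insert _).isCompact_convexHull (𝕜 := ℝ) |>.isClosed.measurableSet).nullMeasurableSet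
  have hsep1 : volume (T0 ∩ T1) = 0 := by
    apply measure_mono_null _ (line_nullset' (a := (6802948979591153 / 20000000000000000 : ℝ)) (b := (71321080786036757 / 125000000000000000 : ℝ)) (c := (-65671460912351309752762689757420693 / 250000000000000000000000000000000000 : ℝ)) (Or.inr (by norm_num)))
    have hle : T0 ⊆ {z : ℝ×ℝ | (6802948979591153 / 20000000000000000 : ℝ)*z.1+(71321080786036757 / 125000000000000000 : ℝ)*z.2 ≤ (-65671460912351309752762689757420693 / 250000000000000000000000000000000000 : ℝ)} := by
      have h0 : T0 ⊆ {z : ℝ×ℝ | (6802948979591153 / 20000000000000000 : ℝ)*z.1+(71321080786036757 / 125000000000000000 : ℝ)*z.2 ≤ (-65671460912351309752762689757420693 / 250000000000000000000000000000000000 : ℝ)} := by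
        rw [hT0def]
        apply hull_sub_le'
        intro z hz
        simp only [Set.mem_insert_iff, Set.mem_singleton_iff] at hz
        rcases hz with rfl|rfl|rfl <;> norm_num [c0, c1, c2]
      exact h0
    have hge : T1 ⊆ {z : ℝ×ℝ | (-65671460912351309752762689757420693 / 250000000000000000000000000000000000 : ℝ) ≤ (6802948979591153 / 20000000000000000 : ℝ)*z.1+(71321080786036757 / 125000000000000000 : ℝ)*z.2} := by
      rw [hT1def]
      apply hull_sub_ge'
      intro z hz
      simp only [Set.mem_insert_iff, Set.mem_singleton_iff] at hz
      rcases hz with rfl|rfl|rfl <;> norm_num [c0, c2, c3]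
    intro z hz
    exact le_antisymm (hle hz.1) (hge hz.2)
  have hsep2 : volume ((T0 ∪ T1) ∩ T2) = 0 := by
    apply measure_mono_null _ (line_nullset' (a := (93592302719223091 / 500000000000000000 : ℝ)) (b := (215963962352108111 / 250000000000000000 : ℝ)) (c := (-12026261691886238523973501876394281 / 50000000000000000000000000000000000 : ℝ)) (Or.inr (by norm_num)))
    have hle : (T0 ∪ T1) ⊆ {z : ℝ×ℝ | (93592302719223091 / 500000000000000000 : ℝ)*z.1+(215963962352108111 / 250000000000000000 : ℝ)*z.2 ≤ (-12026261691886238523973501876394281 / 50000000000000000000000000000000000 : ℝ)} := by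
      have h0 : T0 ⊆ {z : ℝ×ℝ | (93592302719223091 / 500000000000000000 : ℝ)*z.1+(215963962352108111 / 250000000000000000 : ℝ)*z.2 ≤ (-12026261691886238523973501876394281 / 50000000000000000000000000000000000 : ℝ)} := by
        rw [hT0def]
        apply hull_sub_le'
        intro z hz
        simp only [Set.mem_insert_iff, Set.mem_singleton_iff] at hz
        rcases hz with rfl|rfl|rfl <;> norm_num [c0, c1, c2]
      have h1 : T1 ⊆ {z : ℝ×ℝ | (93592302719223091 / 500000000000000000 : ℝ)*z.1+(215963962352108111 / 250000000000000000 : ℝ)*z.2 ≤ (-12026261691886238523973501876394281 / 50000000000000000000000000000000000 : ℝ)} := by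
        rw [hT1def]
        apply hull_sub_le'
        intro z hz
        simp only [Set.mem_insert_iff, Set.mem_singleton_iff] at hz
        rcases hz with rfl|rfl|rfl <;> norm_num [c0, c2, c3]
      exact Set.union_subset h0 h1
    have hge : T2 ⊆ {z : ℝ×ℝ | (-12026261691886238523973501876394281 / 50000000000000000000000000000000000 : ℝ) ≤ (93592302719223091 / 500000000000000000 : ℝ)*z.1+(215963962352108111 / 250000000000000000 : ℝ)*z.2} := by
      rw [hT2def]
      apply hull_sub_ge'
      intro z hz
      simp only [Set.mem_insert_iff, Set.mem_singleton_iff] at hz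
      rcases hz with rfl|rfl|rfl <;> norm_num [c0, c3, c4]
    intro z hz
    exact le_antisymm (hle hz.1) (hge hz.2)
  have hsep3 : volume (((T0 ∪ T1) ∪ T2) ∩ T3) = 0 := by
    apply measure_mono_null _ (line_nullset' (a := (-101795692694612921 / 1000000000000000000 : ℝ)) (b := (497402661507792011 / 500000000000000000 : ℝ)) (c := (-62404928339543869277803712425760969 / 500000000000000000000000000000000000 : ℝ)) (Or.inr (by norm_num)))
    have hle : ((T0 ∪ T1) ∪ T2) ⊆ {z : ℝ×ℝ | (-101795692694612921 / 1000000000000000000 : ℝ)*z.1+(497402661507792011 / 500000000000000000 : ℝ)*z.2 ≤ (-62404928339543869277803712425760969 / 500000000000000000000000000000000000 : ℝ)} := by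
      have h0 : T0 ⊆ {z : ℝ×ℝ | (-101795692694612921 / 1000000000000000000 : ℝ)*z.1+(497402661507792011 / 500000000000000000 : ℝ)*z.2 ≤ (-62404928339543869277803712425760969 / 500000000000000000000000000000000000 : ℝ)} := by
        rw [hT0def]
        apply hull_sub_le'
        intro z hz
        simp only [Set.mem_insert_iff, Set.mem_singleton_iff] at hz
        rcases hz with rfl|rfl|rfl <;> norm_num [c0, c1, c2]
      have h1 : T1 ⊆ {z : ℝ×ℝ | (-101795692694612921 / 1000000000000000000 : ℝ)*z.1+(497402661507792011 / 500000000000000000 : ℝ)*z.2 ≤ (-62404928339543869277803712425760969 / 500000000000000000000000000000000000 : ℝ)} := by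
        rw [hT1def]
        apply hull_sub_le'
        intro z hz
        simp only [Set.mem_insert_iff, Set.mem_singleton_iff] at hz
        rcases hz with rfl|rfl|rfl <;> norm_num [c0, c2, c3]
      have h2 : T2 ⊆ {z : ℝ×ℝ | (-101795692694612921 / 1000000000000000000 : ℝ)*z.1+(497402661507792011 / 500000000000000000 : ℝ)*z.2 ≤ (-62404928339543869277803712425760969 / 500000000000000000000000000000000000 : ℝ)} := by
        rw [hT2def]
        apply hull_sub_le'
        intro z hz
        simp only [Set.mem_insert_iff, Set.mem_singleton_iff] at hz
        rcases hz with rfl|rfl|rfl <;> norm_num [c0, c3, c4]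
      exact Set.union_subset (Set.union_subset h0 h1) h2
    have hge : T3 ⊆ {z : ℝ×ℝ | (-62404928339543869277803712425760969 / 500000000000000000000000000000000000 : ℝ) ≤ (-101795692694612921 / 1000000000000000000 : ℝ)*z.1+(497402661507792011 / 500000000000000000 : ℝ)*z.2} := by
      rw [hT3def]
      apply hull_sub_ge'
      intro z hz
      simp only [Set.mem_insert_iff, Set.mem_singleton_iff] at hz
      rcases hz with rfl|rfl|rfl <;> norm_num [c0, c4, c5]
    intro z hz
    exact le_antisymm (hle hz.1) (hge hz.2)
  have hsep4 : volume ((((T0 ∪ T1) ∪ T2) ∪ T3) ∩ T4) = 0 := by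
    apply measure_mono_null _ (line_nullset' (a := (-154709752535870741 / 500000000000000000 : ℝ)) (b := (475462817573611543 / 500000000000000000 : ℝ)) (c := (-109957801391904188679714218464859 / 6250000000000000000000000000000000 : ℝ)) (Or.inr (by norm_num)))
    have hle : (((T0 ∪ T1) ∪ T2) ∪ T3) ⊆ {z : ℝ×ℝ | (-154709752535870741 / 500000000000000000 : ℝ)*z.1+(475462817573611543 / 500000000000000000 : ℝ)*z.2 ≤ (-109957801391904188679714218464859 / 6250000000000000000000000000000000 : ℝ)} := by
      have h0 : T0 ⊆ {z : ℝ×ℝ | (-154709752535870741 / 500000000000000000 : ℝ)*z.1+(475462817573611543 / 500000000000000000 : ℝ)*z.2 ≤ (-109957801391904188679714218464859 / 6250000000000000000000000000000000 : ℝ)} := by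
        rw [hT0def]
        apply hull_sub_le'
        intro z hz
        simp only [Set.mem_insert_iff, Set.mem_singleton_iff] at hz
        rcases hz with rfl|rfl|rfl <;> norm_num [c0, c1, c2]
      have h1 : T1 ⊆ {z : ℝ×ℝ | (-154709752535870741 / 500000000000000000 : ℝ)*z.1+(475462817573611543 / 500000000000000000 : ℝ)*z.2 ≤ (-109957801391904188679714218464859 / 6250000000000000000000000000000000 : ℝ)} := by
        rw [hT1def]
        apply hull_sub_le'
        intro z hz
        simp only [Set.mem_insert_iff, Set.mem_singleton_iff] at hz
        rcases hz with rfl|rfl|rfl <;> norm_num [c0, c2, c3]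
      have h2 : T2 ⊆ {z : ℝ×ℝ | (-154709752535870741 / 500000000000000000 : ℝ)*z.1+(475462817573611543 / 500000000000000000 : ℝ)*z.2 ≤ (-109957801391904188679714218464859 / 6250000000000000000000000000000000 : ℝ)} := by
        rw [hT2def]
        apply hull_sub_le'
        intro z hz
        simp only [Set.mem_insert_iff, Set.mem_singleton_iff] at hz
        rcases hz with rfl|rfl|rfl <;> norm_num [c0, c3, c4]
      have h3 : T3 ⊆ {z : ℝ×ℝ | (-154709752535870741 / 500000000000000000 : ℝ)*z.1+(475462817573611543 / 500000000000000000 : ℝ)*z.2 ≤ (-109957801391904188679714218464859 / 6250000000000000000000000000000000 : ℝ)} := by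
        rw [hT3def]
        apply hull_sub_le'
        intro z hz
        simp only [Set.mem_insert_iff, Set.mem_singleton_iff] at hz
        rcases hz with rfl|rfl|rfl <;> norm_num [c0, c4, c5]
      exact Set.union_subset (Set.union_subset (Set.union_subset h0 h1) h2) h3
    have hge : T4 ⊆ {z : ℝ×ℝ | (-109957801391904188679714218464859 / 6250000000000000000000000000000000 : ℝ) ≤ (-154709752535870741 / 500000000000000000 : ℝ)*z.1+(475462817573611543 / 500000000000000000 : ℝ)*z.2} := by
      rw [hT4def]
      apply hull_sub_ge'
      intro z hz
      simp only [Set.mem_insert_iff, Set.mem_singleton_iff] at hz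
      rcases hz with rfl|rfl|rfl <;> norm_num [c0, c5, c6]
    intro z hz
    exact le_antisymm (hle hz.1) (hge hz.2)
  have hsep5 : volume (((((T0 ∪ T1) ∪ T2) ∪ T3) ∪ T4) ∩ T5) = 0 := by
    apply measure_mono_null _ (line_nullset' (a := (-62888650811334047 / 125000000000000000 : ℝ)) (b := (172844568481466293 / 200000000000000000 : ℝ)) (c := (45207819296612839999711834110737813 / 500000000000000000000000000000000000 : ℝ)) (Or.inr (by norm_num)))
    have hle : ((((T0 ∪ T1) ∪ T2) ∪ T3) ∪ T4) ⊆ {z : ℝ×ℝ | (-62888650811334047 / 125000000000000000 : ℝ)*z.1+(172844568481466293 / 200000000000000000 : ℝ)*z.2 ≤ (45207819296612839999711834110737813 / 500000000000000000000000000000000000 : ℝ)} := by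
      have h0 : T0 ⊆ {z : ℝ×ℝ | (-62888650811334047 / 125000000000000000 : ℝ)*z.1+(172844568481466293 / 200000000000000000 : ℝ)*z.2 ≤ (45207819296612839999711834110737813 / 500000000000000000000000000000000000 : ℝ)} := by
        rw [hT0def]
        apply hull_sub_le'
        intro z hz
        simp only [Set.mem_insert_iff, Set.mem_singleton_iff] at hz
        rcases hz with rfl|rfl|rfl <;> norm_num [c0, c1, c2]
      have h1 : T1 ⊆ {z : ℝ×ℝ | (-62888650811334047 / 125000000000000000 : ℝ)*z.1+(172844568481466293 / 200000000000000000 : ℝ)*z.2 ≤ (45207819296612839999711834110737813 / 500000000000000000000000000000000000 : ℝ)} := by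
        rw [hT1def]
        apply hull_sub_le'
        intro z hz
        simp only [Set.mem_insert_iff, Set.mem_singleton_iff] at hz
        rcases hz with rfl|rfl|rfl <;> norm_num [c0, c2, c3]
      have h2 : T2 ⊆ {z : ℝ×ℝ | (-62888650811334047 / 125000000000000000 : ℝ)*z.1+(172844568481466293 / 200000000000000000 : ℝ)*z.2 ≤ (45207819296612839999711834110737813 / 500000000000000000000000000000000000 : ℝ)} := by
        rw [hT2def]
        apply hull_sub_le'
        intro z hz
        simp only [Set.mem_insert_iff, Set.mem_singleton_iff] at hz
        rcases hz with rfl|rfl|rfl <;> norm_num [c0, c3, c4]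
      have h3 : T3 ⊆ {z : ℝ×ℝ | (-62888650811334047 / 125000000000000000 : ℝ)*z.1+(172844568481466293 / 200000000000000000 : ℝ)*z.2 ≤ (45207819296612839999711834110737813 / 500000000000000000000000000000000000 : ℝ)} := by
        rw [hT3def]
        apply hull_sub_le'
        intro z hz
        simp only [Set.mem_insert_iff, Set.mem_singleton_iff] at hz
        rcases hz with rfl|rfl|rfl <;> norm_num [c0, c4, c5]
      have h4 : T4 ⊆ {z : ℝ×ℝ | (-62888650811334047 / 125000000000000000 : ℝ)*z.1+(172844568481466293 / 200000000000000000 : ℝ)*z.2 ≤ (45207819296612839999711834110737813 / 500000000000000000000000000000000000 : ℝ)} := by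
        rw [hT4def]
        apply hull_sub_le'
        intro z hz
        simp only [Set.mem_insert_iff, Set.mem_singleton_iff] at hz
        rcases hz with rfl|rfl|rfl <;> norm_num [c0, c5, c6]
      exact Set.union_subset (Set.union_subset (Set.union_subset (Set.union_subset h0 h1) h2) h3) h4
    have hge : T5 ⊆ {z : ℝ×ℝ | (45207819296612839999711834110737813 / 500000000000000000000000000000000000 : ℝ) ≤ (-62888650811334047 / 125000000000000000 : ℝ)*z.1+(172844568481466293 / 200000000000000000 : ℝ)*z.2} := by
      rw [hT5def]
      apply hull_sub_ge'
      intro z hz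
      simp only [Set.mem_insert_iff, Set.mem_singleton_iff] at hz
      rcases hz with rfl|rfl|rfl <;> norm_num [c0, c6, c7]
    intro z hz
    exact le_antisymm (hle hz.1) (hge hz.2)
  have hsep6 : volume ((((((T0 ∪ T1) ∪ T2) ∪ T3) ∪ T4) ∪ T5) ∩ T6) = 0 := by
    apply measure_mono_null _ (line_nullset' (a := (-5153870984538387 / 7812500000000000 : ℝ)) (b := (294145742117562771 / 500000000000000000 : ℝ)) (c := (53414697935585977944287282304667503 / 250000000000000000000000000000000000 : ℝ)) (Or.inr (by norm_num)))
    have hle : (((((T0 ∪ T1) ∪ T2) ∪ T3) ∪ T4) ∪ T5) ⊆ {z : ℝ×ℝ | (-5153870984538387 / 7812500000000000 : ℝ)*z.1+(294145742117562771 / 500000000000000000 : ℝ)*z.2 ≤ (53414697935585977944287282304667503 / 250000000000000000000000000000000000 : ℝ)} := by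
      have h0 : T0 ⊆ {z : ℝ×ℝ | (-5153870984538387 / 7812500000000000 : ℝ)*z.1+(294145742117562771 / 500000000000000000 : ℝ)*z.2 ≤ (53414697935585977944287282304667503 / 250000000000000000000000000000000000 : ℝ)} := by
        rw [hT0def]
        apply hull_sub_le'
        intro z hz
        simp only [Set.mem_insert_iff, Set.mem_singleton_iff] at hz
        rcases hz with rfl|rfl|rfl <;> norm_num [c0, c1, c2]
      have h1 : T1 ⊆ {z : ℝ×ℝ | (-5153870984538387 / 7812500000000000 : ℝ)*z.1+(294145742117562771 / 500000000000000000 : ℝ)*z.2 ≤ (53414697935585977944287282304667503 / 250000000000000000000000000000000000 : ℝ)} := by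
        rw [hT1def]
        apply hull_sub_le'
        intro z hz
        simp only [Set.mem_insert_iff, Set.mem_singleton_iff] at hz
        rcases hz with rfl|rfl|rfl <;> norm_num [c0, c2, c3]
      have h2 : T2 ⊆ {z : ℝ×ℝ | (-5153870984538387 / 7812500000000000 : ℝ)*z.1+(294145742117562771 / 500000000000000000 : ℝ)*z.2 ≤ (53414697935585977944287282304667503 / 250000000000000000000000000000000000 : ℝ)} := by
        rw [hT2def]
        apply hull_sub_le'
        intro z hz
        simp only [Set.mem_insert_iff, Set.mem_singleton_iff] at hz
        rcases hz with rfl|rfl|rfl <;> norm_num [c0, c3, c4]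
      have h3 : T3 ⊆ {z : ℝ×ℝ | (-5153870984538387 / 7812500000000000 : ℝ)*z.1+(294145742117562771 / 500000000000000000 : ℝ)*z.2 ≤ (53414697935585977944287282304667503 / 250000000000000000000000000000000000 : ℝ)} := by
        rw [hT3def]
        apply hull_sub_le'
        intro z hz
        simp only [Set.mem_insert_iff, Set.mem_singleton_iff] at hz
        rcases hz with rfl|rfl|rfl <;> norm_num [c0, c4, c5]
      have h4 : T4 ⊆ {z : ℝ×ℝ | (-5153870984538387 / 7812500000000000 : ℝ)*z.1+(294145742117562771 / 500000000000000000 : ℝ)*z.2 ≤ (53414697935585977944287282304667503 / 250000000000000000000000000000000000 : ℝ)} := by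
        rw [hT4def]
        apply hull_sub_le'
        intro z hz
        simp only [Set.mem_insert_iff, Set.mem_singleton_iff] at hz
        rcases hz with rfl|rfl|rfl <;> norm_num [c0, c5, c6]
      have h5 : T5 ⊆ {z : ℝ×ℝ | (-5153870984538387 / 7812500000000000 : ℝ)*z.1+(294145742117562771 / 500000000000000000 : ℝ)*z.2 ≤ (53414697935585977944287282304667503 / 250000000000000000000000000000000000 : ℝ)} := by
        rw [hT5def]
        apply hull_sub_le'
        intro z hz
        simp only [Set.mem_insert_iff, Set.mem_singleton_iff] at hz
        rcases hz with rfl|rfl|rfl <;> norm_num [c0, c6, c7]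
      exact Set.union_subset (Set.union_subset (Set.union_subset (Set.union_subset (Set.union_subset h0 h1) h2) h3) h4) h5
    have hge : T6 ⊆ {z : ℝ×ℝ | (53414697935585977944287282304667503 / 250000000000000000000000000000000000 : ℝ) ≤ (-5153870984538387 / 7812500000000000 : ℝ)*z.1+(294145742117562771 / 500000000000000000 : ℝ)*z.2} := by
      rw [hT6def]
      apply hull_sub_ge'
      intro z hz
      simp only [Set.mem_insert_iff, Set.mem_singleton_iff] at hz
      rcases hz with rfl|rfl|rfl <;> norm_num [c0, c7, c8]
    intro z hz
    exact le_antisymm (hle hz.1) (hge hz.2)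
  have hsep7 : volume (((((((T0 ∪ T1) ∪ T2) ∪ T3) ∪ T4) ∪ T5) ∪ T6) ∩ T7) = 0 := by
    apply measure_mono_null _ (line_nullset' (a := (-152694546541916359 / 250000000000000000 : ℝ)) (b := (261149140216552577 / 1000000000000000000 : ℝ)) (c := (123649040711148321394585959077383121 / 500000000000000000000000000000000000 : ℝ)) (Or.inr (by norm_num)))
    have hle : ((((((T0 ∪ T1) ∪ T2) ∪ T3) ∪ T4) ∪ T5) ∪ T6) ⊆ {z : ℝ×ℝ | (-152694546541916359 / 250000000000000000 : ℝ)*z.1+(261149140216552577 / 1000000000000000000 : ℝ)*z.2 ≤ (123649040711148321394585959077383121 / 500000000000000000000000000000000000 : ℝ)} := by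
      have h0 : T0 ⊆ {z : ℝ×ℝ | (-152694546541916359 / 250000000000000000 : ℝ)*z.1+(261149140216552577 / 1000000000000000000 : ℝ)*z.2 ≤ (123649040711148321394585959077383121 / 500000000000000000000000000000000000 : ℝ)} := by
        rw [hT0def]
        apply hull_sub_le'
        intro z hz
        simp only [Set.mem_insert_iff, Set.mem_singleton_iff] at hz
        rcases hz with rfl|rfl|rfl <;> norm_num [c0, c1, c2]
      have h1 : T1 ⊆ {z : ℝ×ℝ | (-152694546541916359 / 250000000000000000 : ℝ)*z.1+(261149140216552577 / 1000000000000000000 : ℝ)*z.2 ≤ (123649040711148321394585959077383121 / 500000000000000000000000000000000000 : ℝ)} := by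
        rw [hT1def]
        apply hull_sub_le'
        intro z hz
        simp only [Set.mem_insert_iff, Set.mem_singleton_iff] at hz
        rcases hz with rfl|rfl|rfl <;> norm_num [c0, c2, c3]
      have h2 : T2 ⊆ {z : ℝ×ℝ | (-152694546541916359 / 250000000000000000 : ℝ)*z.1+(261149140216552577 / 1000000000000000000 : ℝ)*z.2 ≤ (123649040711148321394585959077383121 / 500000000000000000000000000000000000 : ℝ)} := by
        rw [hT2def]
        apply hull_sub_le'
        intro z hz
        simp only [Set.mem_insert_iff, Set.mem_singleton_iff] at hz
        rcases hz with rfl|rfl|rfl <;> norm_num [c0, c3, c4]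
      have h3 : T3 ⊆ {z : ℝ×ℝ | (-152694546541916359 / 250000000000000000 : ℝ)*z.1+(261149140216552577 / 1000000000000000000 : ℝ)*z.2 ≤ (123649040711148321394585959077383121 / 500000000000000000000000000000000000 : ℝ)} := by
        rw [hT3def]
        apply hull_sub_le'
        intro z hz
        simp only [Set.mem_insert_iff, Set.mem_singleton_iff] at hz
        rcases hz with rfl|rfl|rfl <;> norm_num [c0, c4, c5]
      have h4 : T4 ⊆ {z : ℝ×ℝ | (-152694546541916359 / 250000000000000000 : ℝ)*z.1+(261149140216552577 / 1000000000000000000 : ℝ)*z.2 ≤ (123649040711148321394585959077383121 / 500000000000000000000000000000000000 : ℝ)} := by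
        rw [hT4def]
        apply hull_sub_le'
        intro z hz
        simp only [Set.mem_insert_iff, Set.mem_singleton_iff] at hz
        rcases hz with rfl|rfl|rfl <;> norm_num [c0, c5, c6]
      have h5 : T5 ⊆ {z : ℝ×ℝ | (-152694546541916359 / 250000000000000000 : ℝ)*z.1+(261149140216552577 / 1000000000000000000 : ℝ)*z.2 ≤ (123649040711148321394585959077383121 / 500000000000000000000000000000000000 : ℝ)} := by
        rw [hT5def]
        apply hull_sub_le'
        intro z hz
        simp only [Set.mem_insert_iff, Set.mem_singleton_iff] at hz
        rcases hz with rfl|rfl|rfl <;> norm_num [c0, c6, c7]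
      have h6 : T6 ⊆ {z : ℝ×ℝ | (-152694546541916359 / 250000000000000000 : ℝ)*z.1+(261149140216552577 / 1000000000000000000 : ℝ)*z.2 ≤ (123649040711148321394585959077383121 / 500000000000000000000000000000000000 : ℝ)} := by
        rw [hT6def]
        apply hull_sub_le'
        intro z hz
        simp only [Set.mem_insert_iff, Set.mem_singleton_iff] at hz
        rcases hz with rfl|rfl|rfl <;> norm_num [c0, c7, c8]
      exact Set.union_subset (Set.union_subset (Set.union_subset (Set.union_subset (Set.union_subset (Set.union_subset h0 h1) h2) h3) h4) h5) h6
    have hge : T7 ⊆ {z : ℝ×ℝ | (123649040711148321394585959077383121 / 500000000000000000000000000000000000 : ℝ) ≤ (-152694546541916359 / 250000000000000000 : ℝ)*z.1+(261149140216552577 / 1000000000000000000 : ℝ)*z.2} := by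
      rw [hT7def]
      apply hull_sub_ge'
      intro z hz
      simp only [Set.mem_insert_iff, Set.mem_singleton_iff] at hz
      rcases hz with rfl|rfl|rfl <;> norm_num [c0, c8, c9]
    intro z hz
    exact le_antisymm (hle hz.1) (hge hz.2)
  have hvolU : volume ((((((((T0 ∪ T1) ∪ T2) ∪ T3) ∪ T4) ∪ T5) ∪ T6) ∪ T7)) = volume T0 + volume T1 + volume T2 + volume T3 + volume T4 + volume T5 + volume T6 + volume T7 := by
    rw [measure_union₀ hm7 hsep7, measure_union₀ hm6 hsep6, measure_union₀ hm5 hsep5, measure_union₀ hm4 hsep4, measure_union₀ hm3 hsep3, measure_union₀ hm2 hsep2, measure_union₀ hm1 hsep1]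
  have hv0 : ENNReal.ofReal ((38469780702156533748376714396776971 / 1000000000000000000000000000000000000 : ℝ)) ≤ volume T0 := by
    rw [hT0def]
    have := triangle_vol' c0 c1 c2 (by norm_num [c0, c1, c2])
    have heq : ((c1.1-c0.1)*(c2.2-c0.2) - (c1.2-c0.2)*(c2.1-c0.1))/2 = (38469780702156533748376714396776971 / 1000000000000000000000000000000000000 : ℝ) := by norm_num [c0, c1, c2]
    rwa [heq] at this
  have hv1 : ENNReal.ofReal ((23379587066415565970257750860237801 / 250000000000000000000000000000000000 : ℝ)) ≤ volume T1 := by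
    rw [hT1def]
    have := triangle_vol' c0 c2 c3 (by norm_num [c0, c2, c3])
    have heq : ((c2.1-c0.1)*(c3.2-c0.2) - (c2.2-c0.2)*(c3.1-c0.1))/2 = (23379587066415565970257750860237801 / 250000000000000000000000000000000000 : ℝ) := by norm_num [c0, c2, c3]
    rwa [heq] at this
  have hv2 : ENNReal.ofReal ((8567157701736334558268733778253529 / 62500000000000000000000000000000000 : ℝ)) ≤ volume T2 := by
    rw [hT2def]
    have := triangle_vol' c0 c3 c4 (by norm_num [c0, c3, c4])
    have heq : ((c3.1-c0.1)*(c4.2-c0.2) - (c3.2-c0.2)*(c4.1-c0.1))/2 = (8567157701736334558268733778253529 / 62500000000000000000000000000000000 : ℝ) := by norm_num [c0, c3, c4]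
    rwa [heq] at this
  have hv3 : ENNReal.ofReal ((105506018479669797273318706014353199 / 1000000000000000000000000000000000000 : ℝ)) ≤ volume T3 := by
    rw [hT3def]
    have := triangle_vol' c0 c4 c5 (by norm_num [c0, c4, c5])
    have heq : ((c4.1-c0.1)*(c5.2-c0.2) - (c4.2-c0.2)*(c5.1-c0.1))/2 = (105506018479669797273318706014353199 / 1000000000000000000000000000000000000 : ℝ) := by norm_num [c0, c4, c5]
    rwa [heq] at this
  have hv4 : ENNReal.ofReal ((105506018780593951467773772722670603 / 1000000000000000000000000000000000000 : ℝ)) ≤ volume T4 := by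
    rw [hT4def]
    have := triangle_vol' c0 c5 c6 (by norm_num [c0, c5, c6])
    have heq : ((c5.1-c0.1)*(c6.2-c0.2) - (c5.2-c0.2)*(c6.1-c0.1))/2 = (105506018780593951467773772722670603 / 1000000000000000000000000000000000000 : ℝ) := by norm_num [c0, c5, c6]
    rwa [heq] at this
  have hv5 : ENNReal.ofReal ((17134315389595374199801237431611403 / 125000000000000000000000000000000000 : ℝ)) ≤ volume T5 := by
    rw [hT5def]
    have := triangle_vol' c0 c6 c7 (by norm_num [c0, c6, c7])
    have heq : ((c6.1-c0.1)*(c7.2-c0.2) - (c6.2-c0.2)*(c7.1-c0.1))/2 = (17134315389595374199801237431611403 / 125000000000000000000000000000000000 : ℝ) := by norm_num [c0, c6, c7]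
    rwa [heq] at this
  have hv6 : ENNReal.ofReal ((4675917417497784368763523009979601 / 50000000000000000000000000000000000 : ℝ)) ≤ volume T6 := by
    rw [hT6def]
    have := triangle_vol' c0 c7 c8 (by norm_num [c0, c7, c8])
    have heq : ((c7.1-c0.1)*(c8.2-c0.2) - (c7.2-c0.2)*(c8.1-c0.1))/2 = (4675917417497784368763523009979601 / 50000000000000000000000000000000000 : ℝ) := by norm_num [c0, c7, c8]
    rwa [heq] at this
  have hv7 : ENNReal.ofReal ((76939561140375370080379620418114651 / 2000000000000000000000000000000000000 : ℝ)) ≤ volume T7 := by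
    rw [hT7def]
    have := triangle_vol' c0 c8 c9 (by norm_num [c0, c8, c9])
    have heq : ((c8.1-c0.1)*(c9.2-c0.2) - (c8.2-c0.2)*(c9.1-c0.1))/2 = (76939561140375370080379620418114651 / 2000000000000000000000000000000000000 : ℝ) := by norm_num [c0, c8, c9]
    rwa [heq] at this
  calc ENNReal.ofReal ((74913721 / 100000000 : ℝ))
      ≤ ENNReal.ofReal ((1498274682985540530633340213776698021 / 2000000000000000000000000000000000000 : ℝ)) := ENNReal.ofReal_le_ofReal (by norm_num)
    _ = ENNReal.ofReal ((38469780702156533748376714396776971 / 1000000000000000000000000000000000000 : ℝ)) + ENNReal.ofReal ((23379587066415565970257750860237801 / 250000000000000000000000000000000000 : ℝ)) + ENNReal.ofReal ((8567157701736334558268733778253529 / 62500000000000000000000000000000000 : ℝ)) + ENNReal.ofReal ((105506018479669797273318706014353199 / 1000000000000000000000000000000000000 : ℝ)) + ENNReal.ofReal ((105506018780593951467773772722670603 / 1000000000000000000000000000000000000 : ℝ)) + ENNReal.ofReal ((17134315389595374199801237431611403 / 125000000000000000000000000000000000 : ℝ)) + ENNReal.ofReal ((4675917417497784368763523009979601 /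 50000000000000000000000000000000000 : ℝ)) + ENNReal.ofReal ((76939561140375370080379620418114651 / 2000000000000000000000000000000000000 : ℝ)) := by
        rw [show (1498274682985540530633340213776698021 / 2000000000000000000000000000000000000 : ℝ) = (38469780702156533748376714396776971 / 1000000000000000000000000000000000000 : ℝ) + (23379587066415565970257750860237801 / 250000000000000000000000000000000000 : ℝ) + (8567157701736334558268733778253529 / 62500000000000000000000000000000000 : ℝ) + (105506018479669797273318706014353199 / 1000000000000000000000000000000000000 : ℝ) + (105506018780593951467773772722670603 / 1000000000000000000000000000000000000 : ℝ) + (17134315389595374199801237431611403 / 125000000000000000000000000000000000 : ℝ) + (4675917417497784368763523009979601 / 50000000000000000000000000000000000 : ℝ) + (76939561140375370080379620418114651 / 2000000000000000000000000000000000000 : ℝ) by norm_num]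
        rw [ENNReal.ofReal_add (by norm_num) (by norm_num), ENNReal.ofReal_add (by norm_num) (by norm_num), ENNReal.ofReal_add (by norm_num) (by norm_num), ENNReal.ofReal_add (by norm_num) (by norm_num), ENNReal.ofReal_add (by norm_num) (by norm_num), ENNReal.ofReal_add (by norm_num) (by norm_num), ENNReal.ofReal_add (by norm_num) (by norm_num)]
    _ ≤ volume T0 + volume T1 + volume T2 + volume T3 + volume T4 + volume T5 + volume T6 + volume T7 := by
        exact add_le_add (add_le_add (add_le_add (add_le_add (add_le_add (add_le_add (add_le_add hv0 hv1) hv2) hv3) hv4) hv5) hv6) hv7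
    _ = volume ((((((((T0 ∪ T1) ∪ T2) ∪ T3) ∪ T4) ∪ T5) ∪ T6) ∪ T7)) := hvolU.symm
    _ ≤ volume (convexHull ℝ ({c0, c1, c2, c3, c4, c5, c6, c7, c8, c9} : Set (ℝ × ℝ))) := measure_mono hsub

lemma decagon_vol_toReal :
    ((74913721 / 100000000 : ℝ) : ℝ) ≤ (volume (convexHull ℝ (decagon : Set (EuclideanSpace ℝ (Fin 2))))).toReal := by
  have hcoe : (decagon : Set (EuclideanSpace ℝ (Fin 2))) = ({dp0, dp1, dp2, dp3, dp4, dp5, dp6, dp7, dp8, dp9} : Set (EuclideanSpace ℝ (Fin 2))) := by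
    rw [decagon]
    simp only [Finset.coe_insert, Finset.coe_singleton]
  have himg : gmap' '' ({dp0, dp1, dp2, dp3, dp4, dp5, dp6, dp7, dp8, dp9} : Set (EuclideanSpace ℝ (Fin 2))) = ({c0, c1, c2, c3, c4, c5, c6, c7, c8, c9} : Set (ℝ × ℝ)) := by
    simp only [Set.image_insert_eq, Set.image_singleton, dp0, dp1, dp2, dp3, dp4, dp5, dp6, dp7, dp8, dp9, c0, c1, c2, c3, c4, c5, c6, c7, c8, c9, gmap_pt']
  have hfinC : IsCompact (convexHull ℝ ({c0, c1, c2, c3, c4, c5, c6, c7, c8, c9} : Set (ℝ × ℝ))) := by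
    apply Set.Finite.isCompact_convexHull
    exact (Set.Finite.insert _ (Set.Finite.insert _ (Set.Finite.insert _ (Set.Finite.insert _ (Set.Finite.insert _ (Set.Finite.insert _ (Set.Finite.insert _ (Set.Finite.insert _ (Set.Finite.insert _ (Set.finite_singleton _))))))))))
  have hkey : volume (convexHull ℝ ({dp0, dp1, dp2, dp3, dp4, dp5, dp6, dp7, dp8, dp9} : Set (EuclideanSpace ℝ (Fin 2)))) = volume (convexHull ℝ ({c0, c1, c2, c3, c4, c5, c6, c7, c8, c9} : Set (ℝ × ℝ))) := by
    have h1 : convexHull ℝ ({c0, c1, c2, c3, c4, c5, c6, c7, c8, c9} : Set (ℝ × ℝ)) = gmap' '' convexHull ℝ ({dp0, dp1, dp2, dp3, dp4, dp5, dp6, dp7, dp8, dp9} : Set (EuclideanSpace ℝ (Fin 2))) := by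
      rw [← himg, LinearMap.image_convexHull]
    have h2 : convexHull ℝ ({dp0, dp1, dp2, dp3, dp4, dp5, dp6, dp7, dp8, dp9} : Set (EuclideanSpace ℝ (Fin 2))) = gmap' ⁻¹' (gmap' '' convexHull ℝ ({dp0, dp1, dp2, dp3, dp4, dp5, dp6, dp7, dp8, dp9} : Set (EuclideanSpace ℝ (Fin 2)))) := (Set.preimage_image_eq _ gmap_inj').symm
    rw [h2, h1]
    exact gmap_mp'.measure_preimage (h1 ▸ hfinC.isClosed.measurableSet).nullMeasurableSet
  rw [hcoe, hkey]
  rw [← ENNReal.ofReal_le_iff_le_toReal (hfinC.measure_lt_top).ne]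
  exact decagon_hull_vol

theorem maxArea_decagon_lower_bound :
    (∃ P : Finset (EuclideanSpace ℝ (Fin 2)),
      P.card = 10 ∧ (∀ p ∈ P, ∀ q ∈ P, dist p q ≤ 1) ∧
      0.74913721 ≤ (volume (convexHull ℝ (P : Set (EuclideanSpace ℝ (Fin 2))))).toReal) ∧
    0.74913721 ≤ maxArea 10 := by
  have hnum : (0.74913721 : ℝ) = (74913721 / 100000000 : ℝ) := by norm_num
  have hmain : (0.74913721 : ℝ) ≤ (volume (convexHull ℝ (decagon : Set (EuclideanSpace ℝ (Fin 2))))).toReal := by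
    rw [hnum]; exact decagon_vol_toReal
  constructor
  · exact ⟨decagon, decagon_card, decagon_dist, hmain⟩
  · have hbdd : BddAbove {a : ℝ | ∃ P : Finset (EuclideanSpace ℝ (Fin 2)),
        P.card ≤ 10 ∧ (∀ p ∈ P, ∀ q ∈ P, dist p q ≤ 1) ∧
        a = (volume (convexHull ℝ (P : Set (EuclideanSpace ℝ (Fin 2))))).toReal} := by
      refine ⟨(volume (Metric.closedBall (0 : EuclideanSpace ℝ (Fin 2)) 1)).toReal, ?_⟩
      rintro a ⟨P, hcard, hdist, rfl⟩
      rcases P.eq_empty_or_nonempty with rfl | ⟨p₀, hp₀⟩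
      · simp only [Finset.coe_empty, convexHull_empty, measure_empty, ENNReal.toReal_zero]
        exact ENNReal.toReal_nonneg
      · have hsub : convexHull ℝ (P : Set (EuclideanSpace ℝ (Fin 2))) ⊆ Metric.closedBall p₀ 1 := by
          apply convexHull_min _ (convex_closedBall p₀ 1)
          intro q hq
          rw [Metric.mem_closedBall]
          exact hdist q hq p₀ hp₀
        have hle : volume (convexHull ℝ (P : Set (EuclideanSpace ℝ (Fin 2))))
            ≤ volume (Metric.closedBall (0 : EuclideanSpace ℝ (Fin 2)) 1) := by
          refine le_trans (measure_mono hsub) ?_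
          rw [Measure.addHaar_closedBall_center]
        exact ENNReal.toReal_mono
          ((isCompact_closedBall _ _).measure_lt_top).ne hle
    refine le_trans hmain (le_csSup hbdd ?_)
    exact ⟨decagon, le_of_eq decagon_card, decagon_dist, rfl⟩
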